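/- In the lattice of flats (F, ⊆) of a Faigle geometry (P, F), for X, Y ∈ F one has X ≺ Y if and only if there exists u ∈ Y \ X such that ⇓u ⊆ X and Y = cl(X ∪ {u}). -/

import Mathlib

/-- `X` is a down-set of the poset `P`. -/
def IsDownSet {P : Type*} [PartialOrder P] (X : Set P) : Prop :=
  ∀ ⦃x⦄, x ∈ X → ∀ ⦃y⦄, y ≤ x → y ∈ X

/-- `Y` covers `X` in the poset `(F, ⊆)`. -/
def CoversIn {P : Type*} (F : Set (Set P)) (X Y : Set P) : Prop :=
  X ⊂ Y ∧ ∀ Z ∈ F, ¬(X ⊂ Z ∧ Z ⊂ Y)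

/-- The closure operator associated to the closure system `F`:
`cl(X) = ⋂ {Y ∈ F : X ⊆ Y}`. -/
def clF {P : Type*} (F : Set (Set P)) (X : Set P) : Set P :=
  ⋂₀ {Y | Y ∈ F ∧ X ⊆ Y}

/-- `(P, F)` is a Faigle geometry. -/
structure IsFaigle {P : Type*} [PartialOrder P] [Finite P] (F : Set (Set P)) : Prop where
  univ_mem : Set.univ ∈ F
  inter_mem : ∀ X ∈ F, ∀ Y ∈ F, X ∩ Y ∈ F
  down : ∀ X ∈ F, IsDownSet X
  empty_mem : ∅ ∈ F
  Iic_mem : ∀ u : P, Set.Iic u ∈ F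
  Iio_mem : ∀ u : P, Set.Iio u ∈ F
  cp : ∀ (u : P), ∀ X ∈ F, u ∉ X → Set.Iio u ⊆ X →
      ∃ Y ∈ F, u ∈ Y ∧ CoversIn F X Y

lemma sInter_mem' {P : Type*} [Finite P] {F : Set (Set P)}
    (hu : Set.univ ∈ F) (hi : ∀ X ∈ F, ∀ Y ∈ F, X ∩ Y ∈ F)
    {T : Set (Set P)} (hTF : T ⊆ F) : ⋂₀ T ∈ F := by
  have hT : T.Finite := Set.toFinite _
  refine Set.Finite.induction_on (motive := fun s _ => s ⊆ F → ⋂₀ s ∈ F) T hT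
    (fun _ => by simpa using hu) ?_ hTF
  intro a s _ _ ih hsub
  rw [Set.sInter_insert]
  exact hi _ (hsub (Set.mem_insert _ _)) _
    (ih fun x hx => hsub (Set.mem_insert_of_mem _ hx))

lemma clF_mem {P : Type*} [PartialOrder P] [Finite P] {F : Set (Set P)}
    (hF : IsFaigle F) (S : Set P) : clF F S ∈ F :=
  sInter_mem' hF.univ_mem hF.inter_mem (fun _ h => h.1)

lemma subset_clF {P : Type*} (F : Set (Set P)) (S : Set P) : S ⊆ clF F S :=
  fun x hx => Set.mem_sInter.2 fun _ hW => hW.2 hx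

lemma clF_subset {P : Type*} {F : Set (Set P)} {S W : Set P}
    (hW : W ∈ F) (hSW : S ⊆ W) : clF F S ⊆ W :=
  Set.sInter_subset_of_mem ⟨hW, hSW⟩

/-- Cover characterization in the lattice of flats: for `X, Y ∈ F`,
`X ≺ Y` iff there is `u ∈ Y \ X` with `⇓u ⊆ X` and `Y = cl(X ∪ {u})`. -/
theorem flats_cover_iff {P : Type*} [PartialOrder P] [Finite P]
    {F : Set (Set P)} (hF : IsFaigle F) {X Y : Set P} (hX : X ∈ F) (hY : Y ∈ F) :
    CoversIn F X Y ↔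
      ∃ u : P, u ∈ Y \ X ∧ Set.Iio u ⊆ X ∧ Y = clF F (X ∪ {u}) := by
  constructor
  · rintro ⟨hsub, hnb⟩
    -- pick a minimal element of Y \ X
    have hne : (Y \ X).Nonempty := Set.nonempty_of_ssubset hsub
    obtain ⟨u, hu, hmin⟩ :=
      (fun ⟨u, hu, hm⟩ => ⟨u, hu, fun a ha hle => le_antisymm (hm ha hle) hle⟩ :
        (∃ i, MinimalFor (· ∈ Y \ X) id i) → ∃ u ∈ Y \ X, ∀ a ∈ Y \ X, id a ≤ id u → id u = id a)
        (Set.Finite.exists_minimalFor id (Y \ X) (Set.toFinite _) hne)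
    have hIio : Set.Iio u ⊆ X := by
      intro x hx
      by_contra hxX
      have hxY : x ∈ Y := hF.down Y hY hu.1 hx.le
      have := hmin x ⟨hxY, hxX⟩ (le_of_lt hx)
      exact absurd this.symm (ne_of_lt hx)
    set C := clF F (X ∪ {u}) with hC
    have hCF : C ∈ F := clF_mem hF _
    have hXY : X ⊆ Y := hsub.subset
    have hCY : C ⊆ Y := clF_subset hY (Set.union_subset hXY (by simp [hu.1]))
    have huC : u ∈ C := subset_clF F _ (Set.mem_union_right _ rfl)
    have hXC : X ⊂ C :=
      ⟨(Set.subset_union_left).trans (subset_clF F _), fun h => hu.2 (h huC)⟩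
    have : ¬ (X ⊂ C ∧ C ⊂ Y) := hnb C hCF
    have hCeq : C = Y := by
      by_contra hne'
      exact this ⟨hXC, hCY.ssubset_of_ne hne'⟩
    exact ⟨u, hu, hIio, hCeq.symm⟩
  · rintro ⟨u, ⟨huY, huX⟩, hIio, hYeq⟩
    obtain ⟨W, hWF, huW, hWcov⟩ := hF.cp u X hX huX hIio
    have hXY : X ⊆ Y := hYeq ▸ (Set.subset_union_left).trans (subset_clF F _)
    -- W = Y
    have hWY : W ⊆ Y := by
      have hWYF : W ∩ Y ∈ F := hF.inter_mem W hWF Y hY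
      have hXWY : X ⊂ W ∩ Y :=
        ⟨Set.subset_inter hWcov.1.subset hXY, fun h => huX (h ⟨huW, huY⟩)⟩
      by_contra hnsub
      exact hWcov.2 (W ∩ Y) hWYF
        ⟨hXWY, ⟨Set.inter_subset_left, fun h => hnsub fun x hx => (h hx).2⟩⟩
    have hYW : Y ⊆ W :=
      hYeq ▸ clF_subset hWF (Set.union_subset hWcov.1.subset (by simp [huW]))
    have : W = Y := Set.Subset.antisymm hWY hYW
    exact this ▸ hWcov
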